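/- Let α: ℝⁿ → ℝⁿ be continuously differentiable with Jacobian J, let Q = Qᵀ > 0 be an n×n matrix, and suppose Q J(z) + J(z)ᵀ Q ≤ 2λ Iₙ for all z ∈ ℝⁿ. Then for all x, x̂ ∈ ℝⁿ, (x - x̂)ᵀ Q (α(x) - α(x̂)) ≤ λ ‖x - x̂‖². -/

import Mathlib

/-- if α is C¹ with Jacobian J and QJ(z) + J(z)ᵀQ ≤ 2λI for all z
(with Q = Qᵀ > 0), then (x - x̂)ᵀQ(α(x) - α(x̂)) ≤ λ‖x - x̂‖². -/
theorem stmt_6 {n : ℕ} (α : EuclideanSpace ℝ (Fin n) → EuclideanSpace ℝ (Fin n))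
    (J : EuclideanSpace ℝ (Fin n) → (EuclideanSpace ℝ (Fin n) →L[ℝ] EuclideanSpace ℝ (Fin n)))
    (hderiv : ∀ z, HasFDerivAt α (J z) z) (hJcont : Continuous J)
    (Q : EuclideanSpace ℝ (Fin n) →L[ℝ] EuclideanSpace ℝ (Fin n))
    (hQsymm : ∀ x y, (inner ℝ (Q x) y : ℝ) = inner ℝ x (Q y))
    (hQpos : ∀ x, x ≠ 0 → 0 < (inner ℝ (Q x) x : ℝ))
    (lam : ℝ)
    (hbound : ∀ z v, (inner ℝ (Q v) (J z v) : ℝ) + (inner ℝ (J z v) (Q v) : ℝ) ≤ 2 * lam * ‖v‖^2) :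
    ∀ x xh : EuclideanSpace ℝ (Fin n),
      (inner ℝ (Q (x - xh)) (α x - α xh) : ℝ) ≤ lam * ‖x - xh‖^2 := by
  intro x xh
  set v := x - xh with hv
  -- pointwise bound on ⟪Qv, Jz v⟫
  have key : ∀ z, (inner ℝ (Q v) (J z v) : ℝ) ≤ lam * ‖v‖^2 := by
    intro z
    have h := hbound z v
    have hc := real_inner_comm (Q v) ((J z) v)
    linarith
  -- the curve
  have hc : ∀ t : ℝ, HasDerivAt (fun t : ℝ => xh + t • v) v t := by
    intro t
    simpa using ((hasDerivAt_id t).smul_const v).const_add xh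
  -- g t = ⟪Qv, α (xh + t v)⟫
  have hg : ∀ t : ℝ, HasDerivAt (fun t : ℝ => (inner ℝ (Q v) (α (xh + t • v)) : ℝ))
      (inner ℝ (Q v) (J (xh + t • v) v) : ℝ) t := by
    intro t
    have h1 : HasDerivAt (fun t : ℝ => α (xh + t • v)) (J (xh + t • v) v) t :=
      (hderiv (xh + t • v)).comp_hasDerivAt t (hc t)
    have h2 := (innerSL ℝ (Q v)).hasFDerivAt.comp_hasDerivAt t h1
    simp at h2
    exact h2
  -- h t = lam‖v‖² t - g t is monotone
  set g : ℝ → ℝ := fun t => (inner ℝ (Q v) (α (xh + t • v)) : ℝ) with hgdef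
  have hmono : Monotone (fun t => lam * ‖v‖^2 * t - g t) := by
    apply monotone_of_deriv_nonneg
    · intro t
      exact ((hasDerivAt_id t).const_mul (lam * ‖v‖^2)).sub (hg t) |>.differentiableAt
    · intro t
      have hd : HasDerivAt (fun t => lam * ‖v‖^2 * t - g t)
          (lam * ‖v‖^2 - (inner ℝ (Q v) (J (xh + t • v) v) : ℝ)) t := by
        have h3 := (((hasDerivAt_id t).const_mul (lam * ‖v‖^2)).sub (hg t))
        simp at h3
        exact h3
      rw [hd.deriv]
      have := key (xh + t • v)
      linarith
  have h01 := hmono (by norm_num : (0:ℝ) ≤ 1)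
  have e0 : g 0 = (inner ℝ (Q v) (α xh) : ℝ) := by simp [hgdef]
  have e1 : g 1 = (inner ℝ (Q v) (α x) : ℝ) := by
    simp [hgdef, hv]
  have hsub : (inner ℝ (Q v) (α x - α xh) : ℝ) = g 1 - g 0 := by
    rw [e0, e1, inner_sub_right]
  rw [hsub]
  simp only at h01
  linarith
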